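/- For positive reals SR, PR, SS defined by SR = (k/2)·log(1 + β·δI^{p/2}), PR = (k/2)·log(1 + β·(I+δI)^p/δI^{p/2}), and SS = (k/2)·log(1 + β·(I+δI)^{p/2}), with k, β, p, I, δI > 0, the steady-state value satisfies √(PR·SR) ≤ SS ≤ (PR + SR)/2. -/

import Mathlib

open Real

-- concavity of s ↦ log (log (1 + exp s))
lemma aux_concave : StrictConcaveOn ℝ Set.univ (fun s : ℝ => Real.log (Real.log (1 + Real.exp s))) := by
  have hpos : ∀ s : ℝ, (0:ℝ) < 1 + Real.exp s := fun s => by positivity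
  have hL : ∀ s : ℝ, 0 < Real.log (1 + Real.exp s) := fun s =>
    Real.log_pos (by nlinarith [Real.exp_pos s])
  set g : ℝ → ℝ := fun s => Real.exp s / ((1 + Real.exp s) * Real.log (1 + Real.exp s)) with hg_def
  have h2 : ∀ s : ℝ, HasDerivAt (fun s => Real.log (1 + Real.exp s)) (Real.exp s / (1 + Real.exp s)) s := by
    intro s
    simpa using ((Real.hasDerivAt_exp s).const_add 1).log (hpos s).ne'
  have hG : ∀ s : ℝ, HasDerivAt (fun s : ℝ => Real.log (Real.log (1 + Real.exp s))) (g s) s := by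
    intro s
    have := (h2 s).log (hL s).ne'
    simpa [hg_def, div_div] using this
  have hderivG : deriv (fun s : ℝ => Real.log (Real.log (1 + Real.exp s))) = g := by
    funext s; exact (hG s).deriv
  have hg' : ∀ s : ℝ, HasDerivAt g
      (Real.exp s * (Real.log (1 + Real.exp s) - Real.exp s) /
        ((1 + Real.exp s) * Real.log (1 + Real.exp s))^2) s := by
    intro s
    have hD : HasDerivAt (fun s => (1 + Real.exp s) * Real.log (1 + Real.exp s))
        (Real.exp s * Real.log (1 + Real.exp s) + Real.exp s) s := by
      have := ((Real.hasDerivAt_exp s).const_add 1).fun_mul (h2 s)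
      refine this.congr_deriv ?_
      field_simp
    have hDne : (1 + Real.exp s) * Real.log (1 + Real.exp s) ≠ 0 :=
      (mul_pos (hpos s) (hL s)).ne'
    have := (Real.hasDerivAt_exp s).fun_div hD hDne
    refine this.congr_deriv ?_
    field_simp
    ring
  apply strictConcaveOn_of_deriv2_neg convex_univ
  · apply Continuous.continuousOn
    exact (continuous_const.add Real.continuous_exp).log (fun s => (hpos s).ne') |>.log
      (fun s => (hL s).ne')
  · intro x _
    have : deriv^[2] (fun s : ℝ => Real.log (Real.log (1 + Real.exp s))) x = deriv g x := by
      simp [Function.iterate_succ, hderivG]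
    rw [this, (hg' x).deriv]
    have h1 : Real.log (1 + Real.exp x) - Real.exp x < 0 := by
      have := Real.log_lt_sub_one_of_pos (hpos x) (by nlinarith [Real.exp_pos x])
      linarith
    have h2' : (0:ℝ) < ((1 + Real.exp x) * Real.log (1 + Real.exp x))^2 :=
      pow_pos (mul_pos (hpos x) (hL x)) 2
    exact div_neg_of_neg_of_pos (mul_neg_of_pos_of_neg (Real.exp_pos x) h1) h2'

lemma aux_lower (x y c : ℝ) (hx : 0 < x) (hy : 0 < y) (hc : 0 < c) (h : c^2 = x*y) :
    Real.log (1+x) * Real.log (1+y) ≤ (Real.log (1+c))^2 := by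
  have hcon := aux_concave.concaveOn
  have key := hcon.2 (Set.mem_univ (Real.log x)) (Set.mem_univ (Real.log y))
    (by norm_num : (0:ℝ) ≤ 1/2) (by norm_num : (0:ℝ) ≤ 1/2) (by norm_num)
  have hexp : Real.exp ((1/2 : ℝ) * Real.log x + (1/2 : ℝ) * Real.log y) = c := by
    have h1 : Real.exp ((1/2 : ℝ) * Real.log x + (1/2 : ℝ) * Real.log y) ^ 2 = c ^ 2 := by
      rw [sq, ← Real.exp_add,
        show 1/2 * Real.log x + 1/2 * Real.log y + (1/2 * Real.log x + 1/2 * Real.log y)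
          = Real.log x + Real.log y by ring,
        Real.exp_add, Real.exp_log hx, Real.exp_log hy, h]
    have := congrArg Real.sqrt h1
    rwa [Real.sqrt_sq (Real.exp_pos _).le, Real.sqrt_sq hc.le] at this
  simp only [smul_eq_mul, Real.exp_log hx, Real.exp_log hy] at key
  rw [hexp] at key
  have hLx : 0 < Real.log (1+x) := Real.log_pos (by linarith)
  have hLy : 0 < Real.log (1+y) := Real.log_pos (by linarith)
  have hLc : 0 < Real.log (1+c) := Real.log_pos (by linarith)
  have h2 : Real.log (Real.log (1+x)) + Real.log (Real.log (1+y))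
      ≤ 2 * Real.log (Real.log (1+c)) := by linarith
  calc Real.log (1+x) * Real.log (1+y)
      = Real.exp (Real.log (Real.log (1+x)) + Real.log (Real.log (1+y))) := by
        rw [Real.exp_add, Real.exp_log hLx, Real.exp_log hLy]
    _ ≤ Real.exp (2 * Real.log (Real.log (1+c))) := Real.exp_le_exp.mpr h2
    _ = (Real.log (1+c))^2 := by
        rw [two_mul, Real.exp_add, Real.exp_log hLc, sq]

lemma aux_upper (x y c : ℝ) (hx : 0 < x) (hy : 0 < y) (hc : 0 < c) (h : c^2 = x*y) :
    2 * Real.log (1+c) ≤ Real.log (1+x) + Real.log (1+y) := by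
  have h2c : 2*c ≤ x + y := by nlinarith [sq_nonneg (x - y)]
  have hsq : (1+c)^2 ≤ (1+x)*(1+y) := by nlinarith
  calc 2 * Real.log (1+c) = Real.log ((1+c)^2) := by
        rw [Real.log_pow]; push_cast; ring
    _ ≤ Real.log ((1+x)*(1+y)) := Real.log_le_log (by positivity) hsq
    _ = Real.log (1+x) + Real.log (1+y) := Real.log_mul (by positivity) (by positivity)

theorem adaptation_inequality
    (k β p I δI SR PR SS : ℝ)
    (hk : 0 < k) (hβ : 0 < β) (hp : 0 < p) (hI : 0 < I) (hδI : 0 < δI)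
    (hSR : SR = (k / 2) * Real.log (1 + β * δI ^ (p / 2)))
    (hPR : PR = (k / 2) * Real.log (1 + β * (I + δI) ^ p / δI ^ (p / 2)))
    (hSS : SS = (k / 2) * Real.log (1 + β * (I + δI) ^ (p / 2))) :
    Real.sqrt (PR * SR) ≤ SS ∧ SS ≤ (PR + SR) / 2 := by
  set x := β * δI ^ (p / 2) with hxdef
  set y := β * (I + δI) ^ p / δI ^ (p / 2) with hydef
  set c := β * (I + δI) ^ (p / 2) with hcdef
  have hδp : (0:ℝ) < δI ^ (p / 2) := Real.rpow_pos_of_pos hδI _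
  have hIp : (0:ℝ) < (I + δI) ^ p := Real.rpow_pos_of_pos (by linarith) _
  have hIp2 : (0:ℝ) < (I + δI) ^ (p / 2) := Real.rpow_pos_of_pos (by linarith) _
  have hx : 0 < x := by positivity
  have hy : 0 < y := by positivity
  have hc : 0 < c := by positivity
  have h1 : (I + δI) ^ (p / 2) * (I + δI) ^ (p / 2) = (I + δI) ^ p := by
    rw [← Real.rpow_add (by linarith : (0:ℝ) < I + δI)]
    norm_num
  have hcxy : c ^ 2 = x * y := by
    have : c ^ 2 = β ^ 2 * ((I + δI) ^ (p / 2) * (I + δI) ^ (p / 2)) := by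
      rw [hcdef]; ring
    rw [this, h1, hxdef, hydef]
    field_simp
  have hLow := aux_lower x y c hx hy hc hcxy
  have hUp := aux_upper x y c hx hy hc hcxy
  have hSS0 : 0 ≤ SS := by
    rw [hSS]
    exact mul_nonneg (by positivity) (Real.log_nonneg (by linarith))
  constructor
  · have h3 : PR * SR ≤ SS ^ 2 := by
      calc PR * SR = (k/2)^2 * (Real.log (1 + x) * Real.log (1 + y)) := by
            rw [hPR, hSR]; ring
        _ ≤ (k/2)^2 * (Real.log (1 + c))^2 :=
            mul_le_mul_of_nonneg_left hLow (by positivity)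
        _ = SS ^ 2 := by rw [hSS]; ring
    calc Real.sqrt (PR * SR) ≤ Real.sqrt (SS ^ 2) := Real.sqrt_le_sqrt h3
      _ = SS := by rw [Real.sqrt_sq hSS0]
  · rw [hPR, hSR, hSS]
    have hk2 : (0:ℝ) ≤ k / 2 := by positivity
    nlinarith [mul_le_mul_of_nonneg_left hUp hk2]
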